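/- If the nonnegative parameters b, α, β₁, β₂, k₁, k₂ satisfy conditions (C), then V is a quadratic stochastic operator on S³: there exist real coefficients P_{ij,k} for i,j,k ∈ {1,2,3,4} with P_{ij,k} ≥ 0, P_{ij,k} = P_{ji,k}, and Σ_{k=1}^{4} P_{ij,k} = 1 for all i,j, such that for every point (x₁,x₂,x₃,x₄) ∈ S³ and every k, the k-th coordinate of V(x₁,x₂,x₃,x₄) equals Σ_{i=1}^{4} Σ_{j=1}^{4} P_{ij,k} x_i x_j. -/
import Mathlib

set_option maxHeartbeats 1000000

/-- The discrete-time SISI epidemic operator. -/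
noncomputable def sisiV (b α β₁ β₂ k₁ k₂ : ℝ) (p : ℝ × ℝ × ℝ × ℝ) : ℝ × ℝ × ℝ × ℝ :=
  (p.1 + b - b * p.1 - β₁ * (k₁ * p.2.1 + k₂ * p.2.2.2) * p.1,
   p.2.1 - b * p.2.1 - α * p.2.1 + β₁ * (k₁ * p.2.1 + k₂ * p.2.2.2) * p.1,
   p.2.2.1 - b * p.2.2.1 + α * p.2.1 - β₂ * (k₁ * p.2.1 + k₂ * p.2.2.2) * p.2.2.1,
   p.2.2.2 - b * p.2.2.2 + β₂ * (k₁ * p.2.1 + k₂ * p.2.2.2) * p.2.2.1)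

/-- The simplex S³ in ℝ⁴. -/
def simplexS3 : Set (ℝ × ℝ × ℝ × ℝ) :=
  {p | 0 ≤ p.1 ∧ 0 ≤ p.2.1 ∧ 0 ≤ p.2.2.1 ∧ 0 ≤ p.2.2.2 ∧
       p.1 + p.2.1 + p.2.2.1 + p.2.2.2 = 1}

/-- Conditions (C) on the parameters. -/
def condC (b α β₁ β₂ k₁ k₂ : ℝ) : Prop :=
  α + b ≤ 1 ∧ β₁ * k₂ ≤ 2 ∧ β₂ * k₁ ≤ 2 ∧ b + β₂ * k₂ ≤ 1 ∧
  |b - β₁ * k₁| ≤ 1 ∧ |b - β₂ * k₂| ≤ 1 ∧ |b - β₁ * k₂| ≤ 1 ∧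
  |α + b - β₁ * k₁| ≤ 1 ∧ |α - b - β₂ * k₁| ≤ 1

/-- The coordinates of a point of ℝ⁴ as a function `Fin 4 → ℝ`. -/
noncomputable def coords (p : ℝ × ℝ × ℝ × ℝ) : Fin 4 → ℝ :=
  ![p.1, p.2.1, p.2.2.1, p.2.2.2]

/-- Explicit heredity coefficients for the SISI operator. -/
noncomputable def sisiP (b α β₁ β₂ k₁ k₂ : ℝ) : Fin 4 → Fin 4 → Fin 4 → ℝ :=
  ![![![1, 0, 0, 0],
     ![(1+b-β₁*k₁)/2, (1-b-α+β₁*k₁)/2, α/2, 0],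
     ![(1+b)/2, 0, (1-b)/2, 0],
     ![(1+b-β₁*k₂)/2, β₁*k₂/2, 0, (1-b)/2]],
    ![![(1+b-β₁*k₁)/2, (1-b-α+β₁*k₁)/2, α/2, 0],
     ![b, 1-b-α, α, 0],
     ![b, (1-b-α)/2, (1-b+α-β₂*k₁)/2, β₂*k₁/2],
     ![b, (1-b-α)/2, α/2, (1-b)/2]],
    ![![(1+b)/2, 0, (1-b)/2, 0],
     ![b, (1-b-α)/2, (1-b+α-β₂*k₁)/2, β₂*k₁/2],
     ![b, 0, 1-b, 0],
     ![b, 0, (1-b-β₂*k₂)/2, (1-b+β₂*k₂)/2]],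
    ![![(1+b-β₁*k₂)/2, β₁*k₂/2, 0, (1-b)/2],
     ![b, (1-b-α)/2, α/2, (1-b)/2],
     ![b, 0, (1-b-β₂*k₂)/2, (1-b+β₂*k₂)/2],
     ![b, 0, 0, 1-b]]]

theorem sisi_is_QSO (b α β₁ β₂ k₁ k₂ : ℝ)
    (hb : 0 ≤ b) (hα : 0 ≤ α) (hβ₁ : 0 ≤ β₁) (hβ₂ : 0 ≤ β₂)
    (hk₁ : 0 ≤ k₁) (hk₂ : 0 ≤ k₂)
    (hC : condC b α β₁ β₂ k₁ k₂) :
    ∃ P : Fin 4 → Fin 4 → Fin 4 → ℝ,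
      (∀ i j k, 0 ≤ P i j k) ∧
      (∀ i j k, P i j k = P j i k) ∧
      (∀ i j, ∑ k, P i j k = 1) ∧
      (∀ p ∈ simplexS3, ∀ k,
        coords (sisiV b α β₁ β₂ k₁ k₂ p) k =
          ∑ i, ∑ j, P i j k * coords p i * coords p j) := by
  obtain ⟨h1, h2, h3, h4, h5, h6, h7, h8, h9⟩ := hC
  rw [abs_le] at h5 h6 h7 h8 h9
  obtain ⟨h5a, h5b⟩ := h5
  obtain ⟨h6a, h6b⟩ := h6
  obtain ⟨h7a, h7b⟩ := h7
  obtain ⟨h8a, h8b⟩ := h8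
  obtain ⟨h9a, h9b⟩ := h9
  have hbk1 : 0 ≤ β₁ * k₁ := mul_nonneg hβ₁ hk₁
  have hbk2 : 0 ≤ β₁ * k₂ := mul_nonneg hβ₁ hk₂
  have hck1 : 0 ≤ β₂ * k₁ := mul_nonneg hβ₂ hk₁
  have hck2 : 0 ≤ β₂ * k₂ := mul_nonneg hβ₂ hk₂
  refine ⟨sisiP b α β₁ β₂ k₁ k₂, ?_, ?_, ?_, ?_⟩
  · intro i j k
    fin_cases i <;> fin_cases j <;> fin_cases k <;>
      simp [sisiP, Matrix.vecHead, Matrix.vecTail] <;> linarith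
  · intro i j k
    fin_cases i <;> fin_cases j <;> rfl
  · intro i j
    fin_cases i <;> fin_cases j <;>
      simp [sisiP, Fin.sum_univ_four] <;> ring
  · rintro ⟨x, u, y, v⟩ ⟨hx, hu, hy, hv, hs⟩ k
    fin_cases k <;>
      simp only [sisiP, sisiV, coords] at * <;>
      simp [Fin.sum_univ_four, Matrix.vecHead, Matrix.vecTail]
    · linear_combination (-(x + b*(x+u+y+v+1) - b*x)) * hs
    · linear_combination (-((1-b-α)*u)) * hs
    · linear_combination (-((1-b)*y + α*u)) * hs
    · linear_combination (-((1-b)*v)) * hs
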